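/- Let S ∈ ℝ^{N×N} be a symmetric matrix with entries in [0,1], let W_G be the step graphon induced by S over the uniform partition, and for x ∈ ℝ^N let X_G be the induced step graphon signal. Then for every k ≥ 0 and every x ∈ ℝ^N, T_{W_G}^k X_G = N^{-k} · (S^k x)_G. Consequently, if H = Σ_{k=0}^{K} h_k S^k is a graph filter and H' = Σ_{k=0}^{K} h_k N^k T_{W_G}^k is the graphon filter with rescaled taps h_k N^k, then H'(X_G) = (Hx)_G; i.e., graph filtering and graphon filtering of induced signals agree. -/

import Mathlib

open MeasureTheory

/-- For the step graphon `W_G` induced by a symmetric matrix `S` with entries in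
`[0,1]` and induced step signals `X_G`: iterated graphon shifts satisfy
`T_{W_G}^k X_G = N^{-k}·(Sᵏx)_G` for all `k ≥ 0`, and consequently the graphon
filter with rescaled taps `h_k N^k` applied to `X_G` equals the step signal
induced by the graph-filtered signal `(∑_k h_k Sᵏ) x`. -/
theorem graphon_filter_of_induced_signal (N : ℕ) (hN : 0 < N)
    (S : Matrix (Fin N) (Fin N) ℝ)
    (hS_mem : ∀ i j, S i j ∈ Set.Icc (0:ℝ) 1)
    (hS_symm : S.IsSymm)
    (W : ℝ → ℝ → ℝ)
    (hW : ∀ u v, W u v =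
      ∑ i : Fin N, ∑ j : Fin N, S i j *
        (Set.Ico ((i : ℝ) / N) (((i : ℝ) + 1) / N)).indicator 1 u *
        (Set.Ico ((j : ℝ) / N) (((j : ℝ) + 1) / N)).indicator 1 v)
    (XG : (Fin N → ℝ) → ℝ → ℝ)
    (hXG : ∀ (y : Fin N → ℝ) (u : ℝ), XG y u =
      ∑ i : Fin N, y i * (Set.Ico ((i : ℝ) / N) (((i : ℝ) + 1) / N)).indicator 1 u)
    (TW : (ℝ → ℝ) → (ℝ → ℝ))
    (hTW : ∀ (f : ℝ → ℝ) (v : ℝ), TW f v = ∫ u in Set.Icc (0:ℝ) 1, W u v * f u) :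
    (∀ (k : ℕ) (x : Fin N → ℝ) (v : ℝ),
      (TW^[k] (XG x)) v = ((N : ℝ))⁻¹ ^ k * XG ((S ^ k).mulVec x) v) ∧
    (∀ (K : ℕ) (h : ℕ → ℝ) (x : Fin N → ℝ) (v : ℝ),
      ∑ k ∈ Finset.range (K + 1), h k * (N : ℝ) ^ k * (TW^[k] (XG x)) v =
        XG ((∑ k ∈ Finset.range (K + 1), h k • S ^ k).mulVec x) v) := by
  have hNR : (0:ℝ) < (N:ℝ) := by exact_mod_cast hN
  set χ : Fin N → ℝ → ℝ :=
    fun i => (Set.Ico ((i : ℝ) / N) (((i : ℝ) + 1) / N)).indicator 1 with hχdef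
  have hW' : ∀ u v, W u v = ∑ i : Fin N, ∑ j : Fin N, S i j * χ i u * χ j v := hW
  have hXG' : ∀ (y : Fin N → ℝ) (u : ℝ), XG y u = ∑ i : Fin N, y i * χ i u := hXG
  -- intervals are pairwise disjoint
  have hprod : ∀ (i l : Fin N) (u : ℝ),
      χ i u * χ l u = if i = l then χ i u else 0 := by
    intro i l u
    by_cases hil : i = l
    · subst hil
      simp only [if_pos rfl, hχdef, Set.indicator]
      by_cases hu : u ∈ Set.Ico ((i : ℝ) / N) (((i : ℝ) + 1) / N) <;> simp [hu]
    · simp only [if_neg hil]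
      rcases lt_or_gt_of_ne (fun hv => hil (Fin.ext hv) : (i : ℕ) ≠ (l : ℕ)) with hlt | hlt
      · -- i < l : intervals disjoint
        by_cases hu : u ∈ Set.Ico ((i : ℝ) / N) (((i : ℝ) + 1) / N)
        · have : u ∉ Set.Ico ((l : ℝ) / N) (((l : ℝ) + 1) / N) := by
            intro hu2
            have h1 : u < ((i : ℝ) + 1) / N := hu.2
            have h2 : ((l : ℝ)) / N ≤ u := hu2.1
            have h3 : ((i : ℝ) + 1) ≤ (l : ℝ) := by exact_mod_cast Nat.succ_le_of_lt hlt
            have : ((i : ℝ) + 1) / N ≤ ((l : ℝ)) / N := (div_le_div_iff_of_pos_right hNR).mpr h3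
            linarith
          simp [hχdef, Set.indicator, this]
        · simp [hχdef, Set.indicator, hu]
      · by_cases hu : u ∈ Set.Ico ((l : ℝ) / N) (((l : ℝ) + 1) / N)
        · have : u ∉ Set.Ico ((i : ℝ) / N) (((i : ℝ) + 1) / N) := by
            intro hu2
            have h1 : u < ((l : ℝ) + 1) / N := hu.2
            have h2 : ((i : ℝ)) / N ≤ u := hu2.1
            have h3 : ((l : ℝ) + 1) ≤ (i : ℝ) := by exact_mod_cast Nat.succ_le_of_lt hlt
            have : ((l : ℝ) + 1) / N ≤ ((i : ℝ)) / N := (div_le_div_iff_of_pos_right hNR).mpr h3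
            linarith
          simp [hχdef, Set.indicator, this]
        · simp [hχdef, Set.indicator, hu]
  -- integral of each characteristic function
  have hsub : ∀ i : Fin N,
      Set.Ico ((i : ℝ) / N) (((i : ℝ) + 1) / N) ⊆ Set.Icc (0:ℝ) 1 := by
    intro i u hu
    have hi0 : (0:ℝ) ≤ (i : ℝ) / N := by positivity
    have hi1 : ((i : ℝ) + 1) / N ≤ 1 := by
      rw [div_le_one hNR]
      have : (i : ℕ) + 1 ≤ N := i.2
      exact_mod_cast this
    exact ⟨le_trans hi0 hu.1, le_trans (le_of_lt hu.2) hi1⟩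
  have hint : ∀ i : Fin N, (∫ u in Set.Icc (0:ℝ) 1, χ i u) = ((N:ℝ))⁻¹ := by
    intro i
    have hle : (i:ℝ)/N ≤ ((i:ℝ)+1)/N := (div_le_div_iff_of_pos_right hNR).mpr (by linarith)
    have hmeas : MeasurableSet (Set.Ico ((i : ℝ) / N) (((i : ℝ) + 1) / N)) :=
      measurableSet_Ico
    rw [hχdef]
    simp only
    rw [MeasureTheory.integral_indicator hmeas]
    rw [Measure.restrict_restrict hmeas]
    rw [Set.inter_eq_left.mpr (hsub i)]
    simp only [Pi.one_apply, MeasureTheory.integral_const, smul_eq_mul, mul_one,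
      Measure.restrict_apply_univ, Real.volume_Ico]
    have h0 : (0:ℝ) ≤ ((i:ℝ)+1)/N - (i:ℝ)/N := by linarith
    rw [Measure.real, Measure.restrict_apply_univ, Real.volume_Ico, ENNReal.toReal_ofReal h0]
    field_simp
    ring
  -- integrability of characteristic functions
  have hintg : ∀ (c : ℝ) (i : Fin N),
      IntegrableOn (fun u => c * χ i u) (Set.Icc (0:ℝ) 1) := by
    intro c i
    apply Integrable.const_mul
    rw [hχdef]
    exact (integrable_const (1:ℝ)).indicator measurableSet_Ico
  -- pointwise expansion of the integrand
  have key : ∀ (y : Fin N → ℝ) (u v : ℝ),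
      W u v * XG y u = ∑ i : Fin N, (y i * ∑ j : Fin N, S i j * χ j v) * χ i u := by
    intro y u v
    rw [hW' u v, hXG' y u, Finset.sum_mul]
    refine Finset.sum_congr rfl fun i _ => ?_
    rw [Finset.sum_mul]
    have step : ∀ j : Fin N,
        (S i j * χ i u * χ j v) * (∑ l : Fin N, y l * χ l u)
          = (y i * (S i j * χ j v)) * χ i u := by
      intro j
      rw [Finset.mul_sum]
      have hterm : ∀ l : Fin N,
          (S i j * χ i u * χ j v) * (y l * χ l u)
            = if i = l then (y i * (S i j * χ j v)) * χ i u else 0 := by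
        intro l
        have : (S i j * χ i u * χ j v) * (y l * χ l u)
            = (S i j * χ j v * y l) * (χ i u * χ l u) := by ring
        rw [this, hprod i l u]
        split
        · next hil => subst hil; ring
        · ring
      simp_rw [hterm]
      simp
    simp only [step, Finset.mul_sum, Finset.sum_mul]
  -- single step
  have hstep : ∀ (y : Fin N → ℝ) (v : ℝ),
      TW (XG y) v = ((N:ℝ))⁻¹ * XG (S.mulVec y) v := by
    intro y v
    rw [hTW]
    calc (∫ u in Set.Icc (0:ℝ) 1, W u v * XG y u)
        = ∫ u in Set.Icc (0:ℝ) 1,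
            ∑ i : Fin N, (y i * ∑ j : Fin N, S i j * χ j v) * χ i u := by
          exact integral_congr_ae (Filter.Eventually.of_forall fun u => key y u v)
      _ = ∑ i : Fin N, ∫ u in Set.Icc (0:ℝ) 1,
            (y i * ∑ j : Fin N, S i j * χ j v) * χ i u := by
          exact integral_finset_sum _ fun i _ => hintg _ i
      _ = ∑ i : Fin N, (y i * ∑ j : Fin N, S i j * χ j v) * ((N:ℝ))⁻¹ := by
          refine Finset.sum_congr rfl fun i _ => ?_
          rw [MeasureTheory.integral_const_mul, hint i]
      _ = ((N:ℝ))⁻¹ * XG (S.mulVec y) v := by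
          rw [hXG']
          simp only [Matrix.mulVec, dotProduct]
          rw [Finset.mul_sum]
          rw [show (∑ i : Fin N, (y i * ∑ j : Fin N, S i j * χ j v) * ((N:ℝ))⁻¹)
              = ∑ i : Fin N, ∑ j : Fin N, (y i * (S i j * χ j v)) * ((N:ℝ))⁻¹ by
            refine Finset.sum_congr rfl fun i _ => ?_
            rw [Finset.mul_sum, Finset.sum_mul]]
          rw [Finset.sum_comm]
          refine Finset.sum_congr rfl fun j _ => ?_
          rw [Finset.sum_mul, Finset.mul_sum]
          refine Finset.sum_congr rfl fun i _ => ?_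
          have hsym : S i j = S j i := by
            have := congrFun (congrFun hS_symm j) i
            simpa [Matrix.transpose_apply] using this
          rw [hsym]; ring
  -- part 1 by induction
  have part1 : ∀ (k : ℕ) (x : Fin N → ℝ) (v : ℝ),
      (TW^[k] (XG x)) v = ((N : ℝ))⁻¹ ^ k * XG ((S ^ k).mulVec x) v := by
    intro k
    induction k with
    | zero =>
      intro x v
      simp [Matrix.one_mulVec]
    | succ k ih =>
      intro x v
      rw [Function.iterate_succ_apply']
      have hfun : TW^[k] (XG x)
          = fun u => ((N : ℝ))⁻¹ ^ k * XG ((S ^ k).mulVec x) u :=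
        funext fun u => ih x u
      rw [hfun, hTW]
      have : ∀ u : ℝ, W u v * (((N : ℝ))⁻¹ ^ k * XG ((S ^ k).mulVec x) u)
          = ((N : ℝ))⁻¹ ^ k * (W u v * XG ((S ^ k).mulVec x) u) := fun u => by ring
      rw [integral_congr_ae (Filter.Eventually.of_forall this),
        MeasureTheory.integral_const_mul, ← hTW, hstep]
      rw [show S ^ (k+1) = S * S ^ k from pow_succ' S k, ← Matrix.mulVec_mulVec]
      ring
  refine ⟨part1, ?_⟩
  intro K h x v
  have hNe : (N:ℝ) ≠ 0 := ne_of_gt hNR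
  calc ∑ k ∈ Finset.range (K + 1), h k * (N : ℝ) ^ k * (TW^[k] (XG x)) v
      = ∑ k ∈ Finset.range (K + 1), h k * XG ((S ^ k).mulVec x) v := by
        refine Finset.sum_congr rfl fun k _ => ?_
        rw [part1 k x v]
        rw [show (h k * (N:ℝ)^k) * (((N:ℝ))⁻¹ ^ k * XG ((S ^ k).mulVec x) v)
            = ((N:ℝ)^k * ((N:ℝ))⁻¹ ^ k) * (h k * XG ((S ^ k).mulVec x) v) by ring]
        rw [← mul_pow, mul_inv_cancel₀ hNe, one_pow, one_mul]
    _ = XG ((∑ k ∈ Finset.range (K + 1), h k • S ^ k).mulVec x) v := by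
        rw [hXG']
        rw [show (∑ k ∈ Finset.range (K + 1), h k • S ^ k).mulVec x
            = ∑ k ∈ Finset.range (K + 1), h k • (S ^ k).mulVec x by
          ext i
          simp only [Matrix.mulVec, dotProduct, Finset.sum_apply,
            Matrix.sum_apply, Matrix.smul_apply, Pi.smul_apply, smul_eq_mul,
            Finset.sum_mul, Finset.mul_sum]
          rw [Finset.sum_comm]
          exact Finset.sum_congr rfl fun j _ =>
            Finset.sum_congr rfl fun k _ => by ring]
        rw [show (∑ i : Fin N,
              (∑ k ∈ Finset.range (K + 1), h k • (S ^ k).mulVec x) i * χ i v)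
            = ∑ i : Fin N, ∑ k ∈ Finset.range (K + 1),
              h k * (((S ^ k).mulVec x) i * χ i v) by
          refine Finset.sum_congr rfl fun i _ => ?_
          rw [Finset.sum_apply, Finset.sum_mul]
          exact Finset.sum_congr rfl fun k _ => by
            simp [Pi.smul_apply, smul_eq_mul]; ring]
        rw [Finset.sum_comm]
        refine Finset.sum_congr rfl fun k _ => ?_
        rw [hXG', Finset.mul_sum]
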